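/- Let d ≥ 2 and δ be integers with 1 < δ ≤ d, and let a_d ≥ a_{d−1} ≥ ··· ≥ a_δ ≥ 1 be integers. Set c = Σ_{i=δ}^{d} C(a_i+i, i) and c' = Σ_{i=δ}^{d} C(a_i+i−1, i−1) (these are the d-binomial expansion of c and the (d−1)-binomial expansion of c', respectively). Then c'_⟨d−1⟩ = c_⟨d⟩ − (c_⟨d⟩)_⟨d⟩. -/

import Mathlib

open MvPolynomial

/-! ### Combinatorics of binomial expansions -/

/-- The largest `m` with `C(m,d) ≤ c` (for `c,d ≥ 1`); the leading term `k_d`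
of the `d`-binomial expansion of `c`. -/
def maxBinom (c d : ℕ) : ℕ := Nat.findGreatest (fun m => Nat.choose m d ≤ c) (c + d)

lemma one_le_choose_maxBinom {c d : ℕ} (hc : c ≠ 0) (hd : d ≠ 0) :
    1 ≤ Nat.choose (maxBinom c d) d := by
  have h : d ≤ maxBinom c d :=
    Nat.le_findGreatest (Nat.le_add_left d c)
      (by simpa [Nat.choose_self] using Nat.one_le_iff_ne_zero.mpr hc)
  exact Nat.choose_pos h

/-- Macaulay's function `c ↦ c^⟨d⟩`: if `c = C(k_d,d) + C(k_{d-1},d-1) + ⋯ + C(k_δ,δ)`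
is the `d`-binomial expansion of `c`, then
`macaulayFun c d = C(k_d+1,d+1) + ⋯ + C(k_δ+1,δ+1)`; and `0^⟨d⟩ = c^⟨0⟩ = 0`. -/
def macaulayFun (c d : ℕ) : ℕ :=
  if h : c = 0 ∨ d = 0 then 0
  else
    Nat.choose (maxBinom c d + 1) (d + 1) +
      macaulayFun (c - Nat.choose (maxBinom c d) d) (d - 1)
termination_by c
decreasing_by
  push_neg at h
  have h1 := one_le_choose_maxBinom h.1 h.2
  have h2 := Nat.pos_of_ne_zero h.1
  omega

/-- Green's function `c ↦ c_⟨d⟩`: if `c = C(k_d,d) + C(k_{d-1},d-1) + ⋯ + C(k_δ,δ)`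
is the `d`-binomial expansion of `c`, then
`greenFun c d = C(k_d-1,d) + ⋯ + C(k_δ-1,δ)` (with `C(i,j) = 0` for `i < j`);
and `0_⟨d⟩ = c_⟨0⟩ = 0`. -/
def greenFun (c d : ℕ) : ℕ :=
  if h : c = 0 ∨ d = 0 then 0
  else
    Nat.choose (maxBinom c d - 1) d +
      greenFun (c - Nat.choose (maxBinom c d) d) (d - 1)
termination_by c
decreasing_by
  push_neg at h
  have h1 := one_le_choose_maxBinom h.1 h.2
  have h2 := Nat.pos_of_ne_zero h.1
  omega

/-- The list `[k_d, k_{d-1}, …, k_δ]` of the `d`-binomial expansion of `c`. -/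
def binExpand (c d : ℕ) : List ℕ :=
  if h : c = 0 ∨ d = 0 then []
  else maxBinom c d :: binExpand (c - Nat.choose (maxBinom c d) d) (d - 1)
termination_by c
decreasing_by
  push_neg at h
  have h1 := one_le_choose_maxBinom h.1 h.2
  have h2 := Nat.pos_of_ne_zero h.1
  omega

/-- The Macaulay difference list `(a_d, a_{d-1}, …, a_δ)` of `c` in degree `d`,
where `a_i = k_i - i` for the `d`-binomial expansion `c = Σ C(k_i, i)`. -/
def diffList (c d : ℕ) : List ℕ :=
  List.zipWith (fun m i => m - i) (binExpand c d) ((List.range (d + 1)).reverse)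

/-- `gotzmannCoeffAux c d ℓ` is the number of entries of the Macaulay difference list
of `c` in degree `d` which are equal to `ℓ`; for `c = H_X(d)` this is `C_ℓ(X,d)`. -/
def gotzmannCoeffAux (c d ℓ : ℕ) : ℕ := (diffList c d).count ℓ

/-! ### Hilbert functions of subschemes of projective space -/

/-- The homogeneous coordinate ring `R = k[x_0,…,x_n]` of `ℙⁿ`. -/
abbrev PR (k : Type) [Field k] (n : ℕ) := MvPolynomial (Fin (n + 1)) k

/-- The degree-`d` graded component of an ideal `I ⊆ k[x_0,…,x_n]`,
as a `k`-subspace of the polynomial ring. -/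
noncomputable def idealComp {k : Type} [Field k] {n : ℕ} (I : Ideal (PR k n)) (d : ℕ) :
    Submodule k (PR k n) :=
  Submodule.restrictScalars k I ⊓ homogeneousSubmodule (Fin (n + 1)) k d

/-- The Hilbert function of `R/I`: `hilb I d = dim_k R_d - dim_k I_d`. -/
noncomputable def hilb {k : Type} [Field k] {n : ℕ} (I : Ideal (PR k n)) (d : ℕ) : ℕ :=
  Module.finrank k (homogeneousSubmodule (Fin (n + 1)) k d) -
    Module.finrank k (idealComp I d)

/-- First difference `ΔH(d) = H(d) - H(d-1)` of the Hilbert function of `R/I`. -/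
noncomputable def deltaH {k : Type} [Field k] {n : ℕ} (I : Ideal (PR k n)) (d : ℕ) : ℕ :=
  hilb I d - hilb I (d - 1)

/-- An ideal is homogeneous if it contains all homogeneous components of its elements. -/
def IsHomog {k : Type} [Field k] {n : ℕ} (I : Ideal (PR k n)) : Prop :=
  ∀ f ∈ I, ∀ d : ℕ, MvPolynomial.homogeneousComponent d f ∈ I

/-- The irrelevant maximal ideal `(x_0, …, x_n)`. -/
noncomputable def irrel (k : Type) [Field k] (n : ℕ) : Ideal (PR k n) :=
  Ideal.span (Set.range MvPolynomial.X)

/-- The saturation `I^sat = ⋃_m (I : (x_0,…,x_n)^m)` of an ideal `I`. -/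
noncomputable def satur {k : Type} [Field k] {n : ℕ} (I : Ideal (PR k n)) : Ideal (PR k n) :=
  ⨆ m : ℕ, Submodule.colon I ((irrel k n ^ m : Ideal (PR k n)) : Set (PR k n))

/-- The saturation degree `sat(I)`: the least `r` with `I_j = (I^sat)_j` for all `j ≥ r`. -/
noncomputable def satDeg {k : Type} [Field k] {n : ℕ} (I : Ideal (PR k n)) : ℕ :=
  sInf {r : ℕ | ∀ j ≥ r, idealComp I j = idealComp (satur I) j}

/-- The Gotzmann number (persistence index) `G`: the least `d ≥ 1` such that the Hilbert
function of `R/I` has maximal growth `H(t+1) = H(t)^⟨t⟩` in every degree `t ≥ d`. -/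
noncomputable def Gnum {k : Type} [Field k] {n : ℕ} (I : Ideal (PR k n)) : ℕ :=
  sInf {d : ℕ | 1 ≤ d ∧ ∀ t ≥ d, hilb I (t + 1) = macaulayFun (hilb I t) t}

/-- The invariant `M`: the least `d ≥ 1` such that equality `ΔH(t) = H(t)_⟨t⟩`
in Green's Hyperplane Restriction Theorem holds for every degree `t ≥ d`. -/
noncomputable def Mnum {k : Type} [Field k] {n : ℕ} (I : Ideal (PR k n)) : ℕ :=
  sInf {d : ℕ | 1 ≤ d ∧ ∀ t ≥ d, deltaH I t = greenFun (hilb I t) t}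

/-- The `ℓ`-th Gotzmann coefficient `C_ℓ(X)` of the subscheme defined by `I`: the number of
entries equal to `ℓ` in the (stable) Macaulay difference list of `H_X(d)`, `d ≥ G(X)`. -/
noncomputable def gotzmannCoeff {k : Type} [Field k] {n : ℕ} (I : Ideal (PR k n)) (ℓ : ℕ) : ℕ :=
  gotzmannCoeffAux (hilb I (Gnum I + 1)) (Gnum I + 1) ℓ

/-- `X` is a hypersurface in a linear subspace of `ℙⁿ`:
`I_X = (L_1,…,L_c,F)` for linearly independent linear forms `L_i` and a form `F` of
positive degree which is a nonzerodivisor modulo `(L_1,…,L_c)`. -/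
def IsHypersurfaceInLinearSubspace {k : Type} [Field k] {n : ℕ} (I : Ideal (PR k n)) : Prop :=
  ∃ (c : ℕ) (L : Fin c → PR k n) (F : PR k n) (e : ℕ),
    (∀ i, (L i).IsHomogeneous 1) ∧ LinearIndependent k L ∧
    0 < e ∧ F.IsHomogeneous e ∧
    (∀ g : PR k n, F * g ∈ Ideal.span (Set.range L) → g ∈ Ideal.span (Set.range L)) ∧
    I = Ideal.span (Set.range L ∪ {F})

/-- Equidimensionality: all minimal primes of `I` have quotient of the same Krull dimension. -/
def IsEquidim {k : Type} [Field k] {n : ℕ} (I : Ideal (PR k n)) : Prop :=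
  ∀ p ∈ I.minimalPrimes, ∀ q ∈ I.minimalPrimes,
    ringKrullDim (PR k n ⧸ p) = ringKrullDim (PR k n ⧸ q)

/-- The (affine cone) vanishing ideal of a subset of `k^{n+1}`. -/
def vanishIdeal {k : Type} [Field k] {n : ℕ} (S : Set (Fin (n + 1) → k)) : Ideal (PR k n) where
  carrier := {f | ∀ x ∈ S, MvPolynomial.eval x f = 0}
  add_mem' := by
    intro f g hf hg x hx
    simp [map_add, hf x hx, hg x hx]
  zero_mem' := by intro x hx; simp
  smul_mem' := by
    intro c f hf x hx
    simp [smul_eq_mul, hf x hx]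

/-- The affine cone over the (finite) set of points of `ℙⁿ` with homogeneous
coordinate vectors `v j`. -/
def coneOver {k : Type} [Field k] {n : ℕ} {s : ℕ} (v : Fin s → (Fin (n + 1) → k))
    (T : Set (Fin s)) : Set (Fin (n + 1) → k) :=
  {x | ∃ j ∈ T, ∃ t : k, x = t • v j}

/-- The linear form with coefficient vector `v`. -/
noncomputable def linForm {k : Type} [Field k] {n : ℕ} (v : Fin (n + 1) → k) : PR k n :=
  ∑ j, MvPolynomial.C (v j) * MvPolynomial.X j

/-- `GenericProp k n ℓ Q` : the property `Q` holds for all tuples of `ℓ` (coefficient vectors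
of) linear forms in a suitable nonempty Zariski-open subset of `(R_1)^ℓ`, i.e. on a nonempty
basic open set: the nonvanishing locus of a nonzero polynomial in the coefficients. -/
def GenericProp (k : Type) [Field k] (n ℓ : ℕ) (Q : (Fin ℓ → Fin (n + 1) → k) → Prop) : Prop :=
  ∃ F : MvPolynomial (Fin ℓ × Fin (n + 1)) k, F ≠ 0 ∧
    ∀ M : Fin ℓ → Fin (n + 1) → k, MvPolynomial.eval (fun p => M p.1 p.2) F ≠ 0 → Q M

/-- Castelnuovo–Mumford regularity bound `reg(I) ≤ m`, via the Bayer–Stillman criterion: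
there are linear forms `h_1, …, h_j` such that
`((I + (h_1,…,h_{i-1})) : h_i)_t = (I + (h_1,…,h_{i-1}))_t` for all `t ≥ m` and all `i`, and
`(I + (h_1,…,h_j))_t = R_t` for all `t ≥ m`. -/
def RegLE {k : Type} [Field k] {n : ℕ} (I : Ideal (PR k n)) (m : ℕ) : Prop :=
  ∃ (j : ℕ) (h : Fin j → PR k n),
    (∀ i, (h i).IsHomogeneous 1) ∧
    (∀ i : Fin j, ∀ t, m ≤ t →
      idealComp (Submodule.colon (I ⊔ Ideal.span (h '' {i' | i' < i})) ((Ideal.span {h i} : Ideal (PR k n)) : Set (PR k n))) t =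
        idealComp (I ⊔ Ideal.span (h '' {i' | i' < i})) t) ∧
    (∀ t, m ≤ t →
      idealComp (I ⊔ Ideal.span (Set.range h)) t = homogeneousSubmodule (Fin (n + 1)) k t)

-- m ≤ C(m,d) + d for 1 ≤ d ≤ m
lemma le_choose_add (d : ℕ) (hd : 1 ≤ d) : ∀ m, d ≤ m → m ≤ Nat.choose m d + d := by
  intro m
  induction m with
  | zero => intro h; omega
  | succ m ih =>
    intro h
    rcases Nat.eq_or_lt_of_le h with h' | h'
    · simp [← h']
    · have hdm : d ≤ m := by omega
      have := ih hdm
      have h2 : 1 ≤ Nat.choose m (d - 1) := Nat.choose_pos (by omega)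
      have h3 : Nat.choose (m + 1) d = Nat.choose m (d-1) + Nat.choose m d := by
        obtain ⟨e, rfl⟩ : ∃ e, d = e + 1 := ⟨d-1, by omega⟩
        simp [Nat.choose_succ_succ, Nat.add_comm]
      omega

lemma maxBinom_eq {c d m : ℕ} (hd : 1 ≤ d) (hm : d ≤ m)
    (h1 : Nat.choose m d ≤ c) (h2 : c < Nat.choose (m + 1) d) : maxBinom c d = m := by
  have hmc : m ≤ c + d := by
    have := le_choose_add d hd m hm
    omega
  rw [maxBinom, Nat.findGreatest_eq_iff]
  refine ⟨hmc, fun _ => h1, fun n hn _ hP => ?_⟩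
  have : Nat.choose (m+1) d ≤ Nat.choose n d := Nat.choose_le_choose d hn
  omega

lemma pascal (m e : ℕ) (he : 1 ≤ e) :
    Nat.choose (m + 1) e = Nat.choose m (e - 1) + Nat.choose m e := by
  obtain ⟨f, rfl⟩ : ∃ f, e = f + 1 := ⟨e - 1, by omega⟩
  simp [Nat.choose_succ_succ]

lemma greenFun_zero (d : ℕ) : greenFun 0 d = 0 := by rw [greenFun]; simp

-- sum bound
lemma sum_choose_lt (δ : ℕ) (hδ : 1 ≤ δ) (k : ℕ → ℕ) :
    ∀ d, δ ≤ d → (∀ i, δ ≤ i → i ≤ d → i ≤ k i) →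
    (∀ i j, δ ≤ i → i < j → j ≤ d → k i < k j) →
    (∑ i ∈ Finset.Icc δ d, Nat.choose (k i) i) < Nat.choose (k d + 1) d := by
  intro d hdle
  induction d, hdle using Nat.le_induction with
  | base =>
    intro hk _
    rw [Finset.Icc_self, Finset.sum_singleton]
    have h3 := pascal (k δ) δ hδ
    have : 1 ≤ Nat.choose (k δ) (δ - 1) := Nat.choose_pos (by have := hk δ le_rfl le_rfl; omega)
    omega
  | succ d hdd ih =>
    intro hk hs
    rw [Finset.sum_Icc_succ_top (by omega)]
    have ihh := ih (fun i h1 h2 => hk i h1 (by omega)) (fun i j h1 h2 h3 => hs i j h1 h2 (by omega))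
    have hle : Nat.choose (k d + 1) d ≤ Nat.choose (k (d+1)) d :=
      Nat.choose_le_choose d (by have := hs d (d+1) hdd (by omega) le_rfl; omega)
    have h3 : Nat.choose (k (d+1) + 1) (d+1) = Nat.choose (k (d+1)) d + Nat.choose (k (d+1)) (d+1) :=
      Nat.choose_succ_succ _ _
    omega

lemma greenFun_expand (δ : ℕ) (hδ : 1 ≤ δ) (k : ℕ → ℕ) :
    ∀ d, δ ≤ d → (∀ i, δ ≤ i → i ≤ d → i ≤ k i) →
    (∀ i j, δ ≤ i → i < j → j ≤ d → k i < k j) →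
    greenFun (∑ i ∈ Finset.Icc δ d, Nat.choose (k i) i) d
      = ∑ i ∈ Finset.Icc δ d, Nat.choose (k i - 1) i := by
  intro d hdle
  induction d, hdle using Nat.le_induction with
  | base =>
    intro hk _
    rw [Finset.Icc_self, Finset.sum_singleton, Finset.sum_singleton]
    have hkp : 1 ≤ Nat.choose (k δ) δ := Nat.choose_pos (hk δ le_rfl le_rfl)
    have hmax : maxBinom (Nat.choose (k δ) δ) δ = k δ := by
      apply maxBinom_eq hδ (hk δ le_rfl le_rfl) le_rfl
      have h3 := pascal (k δ) δ hδ
      have : 1 ≤ Nat.choose (k δ) (δ - 1) := Nat.choose_pos (by have := hk δ le_rfl le_rfl; omega)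
      omega
    rw [greenFun]
    simp only [hmax]
    rw [dif_neg (by omega)]
    simp [greenFun_zero]
  | succ d hdd ih =>
    intro hk hs
    have hk' : ∀ i, δ ≤ i → i ≤ d → i ≤ k i := fun i h1 h2 => hk i h1 (by omega)
    have hs' : ∀ i j, δ ≤ i → i < j → j ≤ d → k i < k j := fun i j h1 h2 h3 => hs i j h1 h2 (by omega)
    rw [Finset.sum_Icc_succ_top (by omega), Finset.sum_Icc_succ_top (by omega)]
    set s := ∑ i ∈ Finset.Icc δ d, Nat.choose (k i) i with hsdef
    have hub : s < Nat.choose (k d + 1) d := sum_choose_lt δ hδ k d hdd hk' hs'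
    have hle : Nat.choose (k d + 1) d ≤ Nat.choose (k (d+1)) d :=
      Nat.choose_le_choose d (by have := hs d (d+1) hdd (by omega) le_rfl; omega)
    have hkp : 1 ≤ Nat.choose (k (d+1)) (d+1) := Nat.choose_pos (hk (d+1) (by omega) le_rfl)
    have hmax : maxBinom (s + Nat.choose (k (d+1)) (d+1)) (d+1) = k (d+1) := by
      apply maxBinom_eq (by omega) (hk (d+1) (by omega) le_rfl) (by omega)
      have h3 : Nat.choose (k (d+1) + 1) (d+1) = Nat.choose (k (d+1)) d + Nat.choose (k (d+1)) (d+1) :=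
        Nat.choose_succ_succ _ _
      omega
    rw [greenFun]
    simp only [hmax]
    rw [dif_neg (by omega)]
    simp only [Nat.add_sub_cancel]
    rw [ih hk' hs']
    omega


/-- Let `d ≥ 2`, `1 < δ ≤ d`, and `a_d ≥ a_{d−1} ≥ ⋯ ≥ a_δ ≥ 1`. Set
`c = Σ_{i=δ}^d C(a_i+i,i)` and `c' = Σ_{i=δ}^d C(a_i+i−1,i−1)` (the `d`- and
`(d−1)`-binomial expansions of `c` and `c'`). Then `c'_⟨d−1⟩ = c_⟨d⟩ − (c_⟨d⟩)_⟨d⟩`. -/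
theorem green_of_shift (d δ : ℕ) (hd : 2 ≤ d) (hδ : 1 < δ) (hδd : δ ≤ d)
    (a : ℕ → ℕ) (hmono : MonotoneOn a (Set.Icc δ d)) (ha : 1 ≤ a δ) :
    greenFun (∑ i ∈ Finset.Icc δ d, Nat.choose (a i + i - 1) (i - 1)) (d - 1) =
      greenFun (∑ i ∈ Finset.Icc δ d, Nat.choose (a i + i) i) d -
        greenFun (greenFun (∑ i ∈ Finset.Icc δ d, Nat.choose (a i + i) i) d) d := by
  have hmono' : ∀ i j, δ ≤ i → i ≤ j → j ≤ d → a i ≤ a j :=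
    fun i j h1 h2 h3 => hmono ⟨h1, by omega⟩ ⟨by omega, h3⟩ h2
  have hpos : ∀ i, δ ≤ i → i ≤ d → 1 ≤ a i :=
    fun i h1 h2 => le_trans ha (hmono' δ i le_rfl h1 h2)
  have hmap : ∀ f : ℕ → ℕ, ∑ i ∈ Finset.Icc δ d, f i
      = ∑ j ∈ Finset.Icc (δ - 1) (d - 1), f (j + 1) := by
    intro f
    have h : Finset.Icc δ d
        = Finset.map (addRightEmbedding 1) (Finset.Icc (δ - 1) (d - 1)) := by
      rw [Finset.map_add_right_Icc]
      congr 1 <;> omega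
    rw [h, Finset.sum_map]
    rfl
  have e1 : greenFun (∑ i ∈ Finset.Icc δ d, Nat.choose (a i + i) i) d
      = ∑ i ∈ Finset.Icc δ d, Nat.choose (a i + i - 1) i := by
    exact greenFun_expand δ (by omega) (fun i => a i + i) d hδd
      (fun i h1 h2 => by omega)
      (fun i j h1 h2 h3 => by have := hmono' i j h1 (le_of_lt h2) h3; omega)
  have e2 : greenFun (∑ i ∈ Finset.Icc δ d, Nat.choose (a i + i - 1) i) d
      = ∑ i ∈ Finset.Icc δ d, Nat.choose (a i + i - 2) i := by
    have h := greenFun_expand δ (by omega) (fun i => a i + i - 1) d hδd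
      (fun i h1 h2 => by have := hpos i h1 h2; omega)
      (fun i j h1 h2 h3 => by
        have := hmono' i j h1 (le_of_lt h2) h3
        have := hpos i h1 (by omega); omega)
    rw [h]
    exact Finset.sum_congr rfl fun i hi => by congr 1 <;> omega
  have e3 : ∑ i ∈ Finset.Icc δ d, Nat.choose (a i + i - 1) (i - 1)
      = ∑ j ∈ Finset.Icc (δ - 1) (d - 1), Nat.choose (a (j + 1) + j) j := by
    rw [hmap]
    exact Finset.sum_congr rfl fun j hj => by congr 1 <;> omega
  have e4 : greenFun (∑ j ∈ Finset.Icc (δ - 1) (d - 1), Nat.choose (a (j + 1) + j) j) (d - 1)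
      = ∑ j ∈ Finset.Icc (δ - 1) (d - 1), Nat.choose (a (j + 1) + j - 1) j := by
    exact greenFun_expand (δ - 1) (by omega) (fun j => a (j + 1) + j) (d - 1) (by omega)
      (fun j h1 h2 => by omega)
      (fun i j h1 h2 h3 => by
        have := hmono' (i + 1) (j + 1) (by omega) (by omega) (by omega); omega)
  have e5 : ∑ j ∈ Finset.Icc (δ - 1) (d - 1), Nat.choose (a (j + 1) + j - 1) j
      = ∑ i ∈ Finset.Icc δ d, Nat.choose (a i + i - 2) (i - 1) := by
    rw [hmap fun i => Nat.choose (a i + i - 2) (i - 1)]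
    exact Finset.sum_congr rfl fun j hj => by congr 1 <;> omega
  have e6 : ∑ i ∈ Finset.Icc δ d, Nat.choose (a i + i - 2) (i - 1)
        + ∑ i ∈ Finset.Icc δ d, Nat.choose (a i + i - 2) i
      = ∑ i ∈ Finset.Icc δ d, Nat.choose (a i + i - 1) i := by
    rw [← Finset.sum_add_distrib]
    refine Finset.sum_congr rfl fun i hi => ?_
    simp only [Finset.mem_Icc] at hi
    have hp := pascal (a i + i - 2) i (by omega)
    have : a i + i - 2 + 1 = a i + i - 1 := by have := hpos i hi.1 hi.2; omega
    rw [this] at hp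
    omega
  rw [e3, e4, e5, e1, e2]
  omega
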